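/- The function Φ(z) = 1/2 + (z − 3/4)^{1/2} (principal square root), which expresses p₂ in terms of p₃ for the linear model (α = 1), belongs to the class P of Pick Argument Lessening functions: Φ is holomorphic on H with Im Φ(z) > 0 for z ∈ H, extends continuously to [1, ∞) with real values there, Φ(1) = 1; moreover Φ satisfies Φ(z)² = Φ(z) + z − 1 for all z ∈ H ∪ [1, ∞). -/

import Mathlib

/- The upper half-plane H = {z : ℂ | Im z > 0}. -/
def UHP : Set ℂ := {z : ℂ | 0 < z.im}

/- The half-axis [1, ∞) viewed inside ℂ. -/
def posRay : Set ℂ := {z : ℂ | z.im = 0 ∧ 1 ≤ z.re}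

/-- The class P of Pick Argument Lessening functions. -/
structure IsPal (φ : ℂ → ℂ) : Prop where
  holo : DifferentiableOn ℂ φ UHP
  mapsUHP : ∀ z ∈ UHP, 0 < (φ z).im
  cont : ContinuousOn φ (UHP ∪ posRay)
  realOnRay : ∀ z ∈ posRay, (φ z).im = 0
  fix_one : φ 1 = 1

lemma slit_of_mem (z : ℂ) (hz : z ∈ UHP ∪ posRay) : z - 3 / 4 ∈ Complex.slitPlane := by
  rcases hz with hz | hz
  · exact Or.inr (by simpa using ne_of_gt hz)
  · refine Or.inl ?_
    simp only [Complex.sub_re]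
    have : ((3 : ℂ) / 4).re = 3 / 4 := by norm_num
    rw [this]
    linarith [hz.2]

lemma sqrt_im_pos {z : ℂ} (hz : z ∈ UHP) :
    0 < ((z - 3 / 4) ^ (((1 / 2 : ℝ)) : ℂ)).im := by
  set w : ℂ := z - 3 / 4 with hw
  have him : 0 < w.im := by
    simp only [hw, Complex.sub_im]
    have : ((3 : ℂ) / 4).im = 0 := by norm_num
    rw [this]; simpa using (show 0 < z.im from hz)
  have hw0 : w ≠ 0 := fun h => by simp [h] at him
  rw [Complex.cpow_def_of_ne_zero hw0, Complex.exp_im]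
  have harg_pos : 0 < Complex.arg w := by
    rcases lt_or_eq_of_le (Complex.arg_nonneg_iff.mpr him.le) with h | h
    · exact h
    · exfalso
      have := Complex.arg_eq_zero_iff.mp h.symm
      exact him.ne' this.2
  have harg_lt : Complex.arg w ≤ Real.pi := Complex.arg_le_pi w
  have him' : (Complex.log w * (((1 / 2 : ℝ)) : ℂ)).im = Complex.arg w * (1 / 2) := by
    simp [Complex.mul_im, Complex.log_im, Complex.log_re]
  rw [him']
  apply mul_pos (Real.exp_pos _)
  apply Real.sin_pos_of_pos_of_lt_pi
  · positivity
  · nlinarith [Real.pi_pos]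

lemma sqrt_real_on_ray {z : ℂ} (hz : z ∈ posRay) :
    ((z - 3 / 4) ^ (((1 / 2 : ℝ)) : ℂ)).im = 0 := by
  obtain ⟨him, hre⟩ := hz
  have hz' : z = ((z.re : ℝ) : ℂ) := by
    apply Complex.ext <;> simp [him]
  have hw : z - 3 / 4 = (((z.re - 3 / 4 : ℝ)) : ℂ) := by
    apply Complex.ext <;> simp [him]
  have hnn : (0 : ℝ) ≤ z.re - 3 / 4 := by linarith
  rw [hw, ← Complex.ofReal_cpow hnn]
  simp

lemma sqrt_sq (z : ℂ) :
    ((z - 3 / 4) ^ (((1 / 2 : ℝ)) : ℂ)) ^ (2 : ℕ) = z - 3 / 4 := by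
  have h12 : (((1 / 2 : ℝ)) : ℂ) = ((2 : ℕ) : ℂ)⁻¹ := by push_cast; norm_num
  rw [h12]
  exact Complex.cpow_nat_inv_pow _ two_ne_zero

theorem linear_model_in_P :
    IsPal (fun z : ℂ => 1 / 2 + (z - 3 / 4) ^ (((1 / 2 : ℝ)) : ℂ)) ∧
      ∀ z ∈ UHP ∪ posRay,
        (1 / 2 + (z - 3 / 4) ^ (((1 / 2 : ℝ)) : ℂ)) ^ (2 : ℕ) =
          (1 / 2 + (z - 3 / 4) ^ (((1 / 2 : ℝ)) : ℂ)) + z - 1 := by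
  constructor
  · constructor
    · intro z hz
      apply DifferentiableAt.differentiableWithinAt
      apply DifferentiableAt.const_add
      exact DifferentiableAt.cpow (by fun_prop) (differentiableAt_const _) (slit_of_mem z (Or.inl hz))
    · intro z hz
      have := sqrt_im_pos hz
      simp only [Complex.add_im]
      have : ((1 : ℂ) / 2).im = 0 := by norm_num
      rw [this]
      simpa using sqrt_im_pos hz
    · intro z hz
      apply ContinuousAt.continuousWithinAt
      apply ContinuousAt.add continuousAt_const
      exact ContinuousAt.cpow (by fun_prop) continuousAt_const (slit_of_mem z hz)
    · intro z hz
      simp only [Complex.add_im]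
      have : ((1 : ℂ) / 2).im = 0 := by norm_num
      rw [this, zero_add]
      exact sqrt_real_on_ray hz
    · have h1 : (1 : ℂ) - 3 / 4 = (((1 / 4 : ℝ)) : ℂ) := by push_cast; norm_num
      show (1 : ℂ) / 2 + ((1 : ℂ) - 3 / 4) ^ (((1 / 2 : ℝ)) : ℂ) = 1
      rw [h1, ← Complex.ofReal_cpow (by norm_num)]
      have : ((1 / 4 : ℝ)) ^ ((1 / 2 : ℝ)) = 1 / 2 := by
        rw [show (1 / 4 : ℝ) = (1 / 2) ^ (2 : ℕ) by norm_num,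
          ← Real.rpow_natCast (1 / 2 : ℝ) 2, ← Real.rpow_mul (by norm_num)]
        norm_num
      rw [this]; push_cast; norm_num
  · intro z hz
    have hs := sqrt_sq z
    set s := (z - 3 / 4) ^ (((1 / 2 : ℝ)) : ℂ)
    have : (1 / 2 + s) ^ (2 : ℕ) = 1 / 4 + s + s ^ (2 : ℕ) := by ring
    rw [this, hs]; ring
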